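/- For every complex number q with |q| < 1, the series h(q) = ∑_{n≥1} (-1)^{n+1} q^{n(n+1)/2} / (1 - q^n) equals ∑_{j≥1} q^{j^2} (1 + 2q^j + 2q^{2j} + ⋯ + 2q^{j^2-j} + q^{j^2}). -/

import Mathlib

open Finset Function

namespace Stmt0Aux

/-- 2-adic valuation. -/
def sOf (e : ℕ) : ℕ := e.factorization 2

/-- odd part. -/
def tOf (e : ℕ) : ℕ := e / 2 ^ sOf e

lemma pow2_decomp (e : ℕ) : 2 ^ sOf e * tOf e = e :=
  Nat.ordProj_mul_ordCompl_eq_self e 2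

lemma tOf_odd {e : ℕ} (he : e ≠ 0) : Odd (tOf e) := by
  have h := Nat.not_dvd_ordCompl Nat.prime_two he
  have h2 : ¬ 2 ∣ tOf e := h
  rw [Nat.odd_iff]
  omega

lemma pow2_unique : ∀ {s s' t t' : ℕ}, Odd t → Odd t' → 2 ^ s * t = 2 ^ s' * t' →
    s = s' ∧ t = t' := by
  intro s
  induction s with
  | zero =>
    intro s' t t' ht ht' h
    cases s' with
    | zero => simpa using h
    | succ s' =>
      exfalso
      rw [Nat.odd_iff] at ht
      have : 2 ∣ t := by
        rw [pow_succ] at h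
        exact ⟨2 ^ s' * t', by simpa [mul_comm, mul_assoc, mul_left_comm] using h⟩
      omega
  | succ s ih =>
    intro s' t t' ht ht' h
    cases s' with
    | zero =>
      exfalso
      rw [Nat.odd_iff] at ht'
      have : 2 ∣ t' := by
        rw [pow_succ] at h
        exact ⟨2 ^ s * t, by simpa [mul_comm, mul_assoc, mul_left_comm] using h.symm⟩
      omega
    | succ s' =>
      have h2 : 2 ^ s * t = 2 ^ s' * t' := by
        have := h
        rw [pow_succ, pow_succ] at this
        have h2 : 2 * (2 ^ s * t) = 2 * (2 ^ s' * t') := by ring_nf; ring_nf at this; linarith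
        omega
      obtain ⟨h3, h4⟩ := ih ht ht' h2
      exact ⟨by omega, h4⟩

lemma sOf_tOf_eq {a b : ℕ} (hb : Odd b) : sOf (2 ^ a * b) = a ∧ tOf (2 ^ a * b) = b := by
  have hb0 : b ≠ 0 := by rintro rfl; simp [Nat.odd_iff] at hb
  have hne : 2 ^ a * b ≠ 0 := by positivity
  exact pow2_unique (tOf_odd hne) hb (pow2_decomp (2 ^ a * b))


open scoped Classical in
/-- A monomial family supported on a condition. -/
noncomputable def mono (q : ℂ) (C : ℕ × ℕ → Prop) : ℕ × ℕ → ℂ :=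
  fun p => if C p then q ^ (p.1 * p.2) else 0

def CA : ℕ × ℕ → Prop := fun p => Odd p.1 ∧ p.1 < 2 * p.2
def CB : ℕ × ℕ → Prop := fun p => Odd p.1 ∧ 0 < p.2 ∧ 2 * p.2 < p.1
def CC : ℕ × ℕ → Prop := fun p =>
  Odd p.1 ∧ p.1 < 2 * p.2 ∧ 2 ^ (sOf p.2 + 1) * p.1 < tOf p.2
def CY : ℕ × ℕ → Prop := fun p =>
  Odd p.1 ∧ p.1 < 2 * p.2 ∧ tOf p.2 < 2 ^ (sOf p.2 + 1) * p.1
def CD : ℕ × ℕ → Prop := fun p => tOf p.2 = p.1 ∧ Odd (sOf p.2)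
def CY1 : ℕ × ℕ → Prop := fun p => CY p ∧ ¬ CD p
def CY2 : ℕ × ℕ → Prop := fun p => CY p ∧ CD p
def CX : ℕ × ℕ → Prop := fun p => 0 < p.1 ∧ 0 < p.2 ∧ p.1 < 2 * p.2 ∧ p.2 < 2 * p.1
def CXle : ℕ × ℕ → Prop := fun p => 0 < p.1 ∧ p.1 ≤ p.2 ∧ p.2 < 2 * p.1
def CXlt : ℕ × ℕ → Prop := fun p => 0 < p.1 ∧ p.1 < p.2 ∧ p.2 < 2 * p.1
def CXgt : ℕ × ℕ → Prop := fun p => 0 < p.2 ∧ p.2 < p.1 ∧ p.1 < 2 * p.2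

/-- A condition is *good* if it forces both coordinates positive. -/
def Good (C : ℕ × ℕ → Prop) : Prop := ∀ p, C p → 1 ≤ p.1 ∧ 1 ≤ p.2

lemma goodCA : Good CA := by
  rintro p ⟨⟨c, hc⟩, h2⟩; omega
lemma goodCB : Good CB := by
  rintro p ⟨⟨c, hc⟩, h2, h3⟩; omega
lemma goodCC : Good CC := by
  rintro p ⟨h1, h2, _⟩; exact goodCA p ⟨h1, h2⟩
lemma goodCY : Good CY := by
  rintro p ⟨h1, h2, _⟩; exact goodCA p ⟨h1, h2⟩
lemma goodCY1 : Good CY1 := fun p h => goodCY p h.1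
lemma goodCY2 : Good CY2 := fun p h => goodCY p h.1
lemma goodCX : Good CX := by rintro p ⟨h1, h2, _⟩; omega
lemma goodCXle : Good CXle := by rintro p ⟨h1, h2, _⟩; omega
lemma goodCXlt : Good CXlt := by rintro p ⟨h1, h2, _⟩; omega
lemma goodCXgt : Good CXgt := by rintro p ⟨h1, h2, _⟩; omega

lemma mono_cond {q : ℂ} {C : ℕ × ℕ → Prop} {p : ℕ × ℕ} (h : mono q C p ≠ 0) : C p := by
  by_contra hc
  rw [mono, if_neg hc] at h
  exact h rfl

lemma mono_pos {q : ℂ} {C : ℕ × ℕ → Prop} {p : ℕ × ℕ} (hc : C p) :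
    mono q C p = q ^ (p.1 * p.2) := by rw [mono, if_pos hc]

lemma mono_q_ne {q : ℂ} {C : ℕ × ℕ → Prop} (hC : Good C) {p : ℕ × ℕ}
    (h : mono q C p ≠ 0) : q ≠ 0 := by
  have hc := mono_cond h
  rw [mono_pos hc] at h
  rintro rfl
  obtain ⟨h1, h2⟩ := hC p hc
  exact h (zero_pow (by positivity))

lemma mono_ne_zero {q : ℂ} {C : ℕ × ℕ → Prop} (hq : q ≠ 0) {p : ℕ × ℕ} (hc : C p) :
    mono q C p ≠ 0 := by
  rw [mono_pos hc]; exact pow_ne_zero _ hq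

section Summability

variable {q : ℂ}

lemma summable_G (hq : ‖q‖ < 1) :
    Summable (fun p : ℕ × ℕ => ‖q‖ ^ (p.1 - 1) * ‖q‖ ^ (p.2 - 1)) := by
  have h0 : (0:ℝ) ≤ ‖q‖ := norm_nonneg q
  have h1 : Summable (fun n : ℕ => ‖q‖ ^ (n - 1)) := by
    rw [← summable_nat_add_iff 1]
    simpa using summable_geometric_of_lt_one h0 hq
  have h2 := Summable.mul_of_nonneg (f := fun n : ℕ => ‖q‖ ^ (n - 1))
    (g := fun n : ℕ => ‖q‖ ^ (n - 1)) h1 h1 (fun n => pow_nonneg h0 _) (fun n => pow_nonneg h0 _)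
  exact h2

lemma mono_summable (hq : ‖q‖ < 1) {C : ℕ × ℕ → Prop} (hC : Good C) : Summable (mono q C) := by
  have h0 : (0:ℝ) ≤ ‖q‖ := norm_nonneg q
  refine Summable.of_norm
    (Summable.of_nonneg_of_le (fun p => norm_nonneg _) (fun p => ?_) (summable_G hq))
  by_cases h : mono q C p = 0
  · rw [h, norm_zero]; positivity
  · have hc := mono_cond h
    obtain ⟨h1, h2⟩ := hC p hc
    rw [mono_pos hc, norm_pow, ← pow_add]
    apply pow_le_pow_of_le_one h0 hq.le
    obtain ⟨a, ha⟩ := Nat.exists_eq_add_of_le h1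
    obtain ⟨b, hb⟩ := Nat.exists_eq_add_of_le h2
    rw [ha, hb]
    have : (1 + a) * (1 + b) = 1 + (a + b + a * b) := by ring
    rw [this]
    omega

end Summability


section Splits

variable (q : ℂ)

lemma split_A : ∀ p, mono q CA p = mono q CY p + mono q CC p := by
  intro p
  by_cases h : CA p
  · obtain ⟨h1, h2⟩ := h
    have he : p.2 ≠ 0 := by omega
    have ht := tOf_odd he
    have hne : tOf p.2 ≠ 2 ^ (sOf p.2 + 1) * p.1 := by
      intro heq
      rw [Nat.odd_iff] at ht
      have : 2 ∣ 2 ^ (sOf p.2 + 1) * p.1 := ⟨2 ^ sOf p.2 * p.1, by ring⟩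
      omega
    rcases lt_trichotomy (tOf p.2) (2 ^ (sOf p.2 + 1) * p.1) with hlt | heq | hgt
    · rw [mono_pos ⟨h1, h2⟩, mono_pos (show CY p from ⟨h1, h2, hlt⟩),
        mono, if_neg (show ¬ CC p from by rintro ⟨_, _, hc⟩; omega), add_zero]
    · exact absurd heq hne
    · rw [mono_pos ⟨h1, h2⟩, mono, if_neg (show ¬ CY p from by rintro ⟨_, _, hc⟩; omega),
        mono_pos (show CC p from ⟨h1, h2, hgt⟩), zero_add]
  · rw [mono, if_neg h, mono, if_neg (show ¬ CY p from fun c => h ⟨c.1, c.2.1⟩),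
      mono, if_neg (show ¬ CC p from fun c => h ⟨c.1, c.2.1⟩), add_zero]

lemma split_Y : ∀ p, mono q CY p = mono q CY1 p + mono q CY2 p := by
  intro p
  by_cases h : CY p
  · by_cases hd : CD p
    · rw [mono_pos h, mono, if_neg (show ¬ CY1 p from fun c => c.2 hd),
        mono_pos (show CY2 p from ⟨h, hd⟩), zero_add]
    · rw [mono_pos h, mono_pos (show CY1 p from ⟨h, hd⟩),
        mono, if_neg (show ¬ CY2 p from fun c => hd c.2), add_zero]
  · rw [mono, if_neg h, mono, if_neg (show ¬ CY1 p from fun c => h c.1),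
      mono, if_neg (show ¬ CY2 p from fun c => h c.1), add_zero]

lemma split_X : ∀ p, mono q CX p = mono q CXle p + mono q CXgt p := by
  intro p
  by_cases h : CX p
  · obtain ⟨h1, h2, h3, h4⟩ := h
    rcases le_or_gt p.1 p.2 with hle | hgt
    · rw [mono_pos (show CX p from ⟨h1, h2, h3, h4⟩), mono_pos (show CXle p from ⟨h1, hle, h4⟩),
        mono, if_neg (show ¬ CXgt p from by rintro ⟨_, hc, _⟩; omega), add_zero]
    · rw [mono_pos (show CX p from ⟨h1, h2, h3, h4⟩),
        mono, if_neg (show ¬ CXle p from by rintro ⟨_, hc, _⟩; omega),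
        mono_pos (show CXgt p from ⟨h2, hgt, h3⟩), zero_add]
  · rw [mono, if_neg h, mono, if_neg (show ¬ CXle p from by
        rintro ⟨h1, h2, h3⟩; exact h ⟨h1, by omega, by omega, h3⟩),
      mono, if_neg (show ¬ CXgt p from by
        rintro ⟨h1, h2, h3⟩; exact h ⟨by omega, h1, h3, by omega⟩), add_zero]

lemma swap_eq : ∀ p : ℕ × ℕ, mono q CXgt (p.2, p.1) = mono q CXlt p := by
  intro p
  by_cases h : CXlt p
  · rw [mono_pos (show CXgt (p.2, p.1) from h), mono_pos h]
    dsimp only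
    rw [mul_comm]
  · rw [mono, if_neg (show ¬ CXgt (p.2, p.1) from h), mono, if_neg h]

end Splits


section Bij

variable {q : ℂ}

lemma tOf_le {e : ℕ} (he : e ≠ 0) : tOf e ≤ e := by
  conv_rhs => rw [← pow2_decomp e]
  exact Nat.le_mul_of_pos_left _ (Nat.pow_pos (by norm_num))

/-- `∑ fC = ∑ fB` via `(d, e) ↦ (tOf e, 2 ^ sOf e * d)`. -/
lemma tsum_CC_eq_CB : ∑' p, mono q CC p = ∑' p, mono q CB p := by
  refine tsum_eq_tsum_of_ne_zero_bij
    (fun x => (tOf x.1.2, 2 ^ sOf x.1.2 * x.1.1)) ?_ ?_ ?_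
  · -- injectivity
    rintro ⟨⟨d, e⟩, hx⟩ ⟨⟨d', e'⟩, hy⟩ h
    simp only [Prod.mk.injEq] at h
    obtain ⟨h1, h2⟩ := h
    obtain ⟨hd, he0, _⟩ := mono_cond hx
    obtain ⟨hd', he0', _⟩ := mono_cond hy
    obtain ⟨hs, ht⟩ := pow2_unique hd hd' h2
    have he : e = e' := by
      rw [← pow2_decomp e, ← pow2_decomp e', hs, h1]
    exact Subtype.ext (Prod.ext ht he)
  · -- support f ⊆ range
    rintro ⟨d, e⟩ hsupp
    have hc := mono_cond hsupp
    have hq0 : q ≠ 0 := mono_q_ne goodCC hsupp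
    obtain ⟨hd, h2, h3⟩ := hc
    have he0 : e ≠ 0 := by
      obtain ⟨c, hcc⟩ := hd; omega
    have ht := tOf_odd he0
    have hCB : CB (tOf e, 2 ^ sOf e * d) := by
      refine ⟨ht, ?_, ?_⟩
      · have : 0 < d := by obtain ⟨c, hcc⟩ := hd; omega
        positivity
      · calc 2 * (2 ^ sOf e * d) = 2 ^ (sOf e + 1) * d := by ring
          _ < tOf e := h3
    refine ⟨⟨(tOf e, 2 ^ sOf e * d), mono_ne_zero hq0 hCB⟩, ?_⟩
    have hs : sOf (2 ^ sOf e * d) = sOf e ∧ tOf (2 ^ sOf e * d) = d := sOf_tOf_eq hd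
    simp only [hs.1, hs.2]
    exact Prod.ext rfl (pow2_decomp e)
  · -- values agree
    rintro ⟨⟨d, e⟩, hx⟩
    obtain ⟨hd, he0, h3⟩ := mono_cond hx
    have he : e ≠ 0 := by omega
    have ht := tOf_odd he
    have hs : sOf (2 ^ sOf e * d) = sOf e ∧ tOf (2 ^ sOf e * d) = d := sOf_tOf_eq hd
    have hCC : CC (tOf e, 2 ^ sOf e * d) := by
      refine ⟨ht, ?_, ?_⟩
      · calc tOf e ≤ e := tOf_le he
          _ < 2 * e := by omega
          _ < d := h3
          _ ≤ 2 ^ sOf e * d := Nat.le_mul_of_pos_left _ (Nat.pow_pos (by norm_num))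
          _ < 2 * (2 ^ sOf e * d) := by
              have : 0 < 2 ^ sOf e * d := by
                have : 0 < d := by obtain ⟨c, hcc⟩ := hd; omega
                positivity
              omega
      · dsimp only
        rw [hs.1, hs.2]
        calc 2 ^ (sOf e + 1) * tOf e = 2 * (2 ^ sOf e * tOf e) := by ring
          _ = 2 * e := by rw [pow2_decomp]
          _ < d := h3
    rw [mono_pos hCC, mono_pos (show CB (d, e) from ⟨hd, by omega, h3⟩)]
    congr 1
    dsimp only
    conv_rhs => rw [← pow2_decomp e]
    ring


/-- `∑ fY₂ = ∑_j q^(2(j+1)²)` via `j ↦ (tOf (j+1), 2^(2 sOf (j+1) + 1) * tOf (j+1))`. -/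
lemma tsum_CY2_eq : ∑' p, mono q CY2 p = ∑' j : ℕ, q ^ (2 * (j + 1) ^ 2) := by
  refine tsum_eq_tsum_of_ne_zero_bij
    (fun x => (tOf (x.1 + 1), 2 ^ (2 * sOf (x.1 + 1) + 1) * tOf (x.1 + 1))) ?_ ?_ ?_
  · -- injectivity
    rintro ⟨j, hj⟩ ⟨k, hk⟩ h
    simp only [Prod.mk.injEq] at h
    obtain ⟨h1, h2⟩ := h
    have hj1 : (j:ℕ) + 1 ≠ 0 := by omega
    have hk1 : (k:ℕ) + 1 ≠ 0 := by omega
    have := pow2_unique (tOf_odd hj1) (tOf_odd hk1) h2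
    have hs : sOf ((j:ℕ) + 1) = sOf ((k:ℕ) + 1) := by omega
    have : (j:ℕ) + 1 = (k:ℕ) + 1 := by
      rw [← pow2_decomp ((j:ℕ) + 1), ← pow2_decomp ((k:ℕ) + 1), hs, h1]
    have hjk : j = k := by omega
    exact Subtype.ext hjk
  · -- support mono CY2 ⊆ range
    rintro ⟨d, e⟩ hsupp
    obtain ⟨⟨hd, hde, hy3⟩, htd, hsodd⟩ := mono_cond hsupp
    have hq0 : q ≠ 0 := mono_q_ne goodCY2 hsupp
    obtain ⟨c, hc⟩ := hsodd
    have hd0 : 0 < d := by obtain ⟨m, hm⟩ := hd; omega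
    have hu : 0 < 2 ^ c * d := by positivity
    have hst : sOf (2 ^ c * d) = c ∧ tOf (2 ^ c * d) = d := sOf_tOf_eq hd
    refine ⟨⟨2 ^ c * d - 1, ?_⟩, ?_⟩
    · exact pow_ne_zero _ hq0
    · have h1 : 2 ^ c * d - 1 + 1 = 2 ^ c * d := by omega
      simp only [h1, hst.1, hst.2]
      refine Prod.ext rfl ?_
      dsimp only
      rw [← pow2_decomp e, htd, hc]
  · -- values agree
    rintro ⟨j, hj⟩
    have hj1 : (j:ℕ) + 1 ≠ 0 := by omega
    have ht := tOf_odd hj1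
    have ht0 : 0 < tOf ((j:ℕ) + 1) := by obtain ⟨m, hm⟩ := ht; omega
    set s := sOf ((j:ℕ) + 1) with hs
    set t := tOf ((j:ℕ) + 1) with htdef
    have hst : sOf (2 ^ (2 * s + 1) * t) = 2 * s + 1 ∧ tOf (2 ^ (2 * s + 1) * t) = t :=
      sOf_tOf_eq ht
    have hCY2 : CY2 (t, 2 ^ (2 * s + 1) * t) := by
      refine ⟨⟨ht, ?_, ?_⟩, ?_, ?_⟩
      · dsimp only
        calc t = 1 * t := (one_mul t).symm
          _ < 2 * (2 ^ (2 * s + 1) * t) := by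
              have h1 : 1 ≤ 2 ^ (2 * s + 1) := Nat.one_le_two_pow
              have := Nat.mul_lt_mul_of_lt_of_le (show (1:ℕ) < 2 * 2 ^ (2*s+1) by omega)
                (le_refl t) ht0
              calc 1 * t < 2 * 2 ^ (2 * s + 1) * t := this
                _ = 2 * (2 ^ (2 * s + 1) * t) := by ring
      · dsimp only
        rw [hst.1, hst.2]
        calc t = 1 * t := (one_mul t).symm
          _ < 2 ^ (2 * s + 1 + 1) * t := by
              have h1 : 1 < 2 ^ (2 * s + 1 + 1) := by
                have : 0 < 2 * s + 1 + 1 := by omega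
                exact Nat.one_lt_two_pow_iff.mpr (by omega)
              exact Nat.mul_lt_mul_of_lt_of_le h1 (le_refl t) ht0
      · dsimp only; rw [hst.2]
      · dsimp only; rw [hst.1]; exact ⟨s, by omega⟩
    rw [mono_pos hCY2]
    have hdecomp : (j:ℕ) + 1 = 2 ^ s * t := (pow2_decomp _).symm
    congr 1
    dsimp only
    rw [hdecomp]
    ring


/-- `∑ fY₁ = ∑ fX` via `(u,v) ↦ (tOf u, 2^(sOf u + sOf v) * tOf v)`. -/
lemma tsum_CY1_eq_CX : ∑' p, mono q CY1 p = ∑' p, mono q CX p := by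
  refine tsum_eq_tsum_of_ne_zero_bij
    (fun x => (tOf x.1.1, 2 ^ (sOf x.1.1 + sOf x.1.2) * tOf x.1.2)) ?_ ?_ ?_
  · -- injectivity
    rintro ⟨⟨u, v⟩, hx⟩ ⟨⟨u', v'⟩, hy⟩ h
    simp only [Prod.mk.injEq] at h
    obtain ⟨h1, h2⟩ := h
    obtain ⟨hu0, hv0, huv, hvu⟩ := mono_cond hx
    obtain ⟨hu0', hv0', huv', hvu'⟩ := mono_cond hy
    obtain ⟨hsum, htv⟩ := pow2_unique (tOf_odd (by omega : v ≠ 0))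
      (tOf_odd (by omega : v' ≠ 0)) h2
    have hdu : 2 ^ sOf u * tOf u = u := pow2_decomp u
    have hdv : 2 ^ sOf v * tOf v = v := pow2_decomp v
    have hdu' : 2 ^ sOf u' * tOf u' = u' := pow2_decomp u'
    have hdv' : 2 ^ sOf v' * tOf v' = v' := pow2_decomp v'
    -- abbreviations
    have hA1 : 2 ^ sOf u * tOf u < 2 * (2 ^ sOf v * tOf v) := by rw [hdu, hdv]; omega
    have hA2 : 2 ^ sOf v * tOf v < 2 * (2 ^ sOf u * tOf u) := by rw [hdu, hdv]; omega
    have hB1 : 2 ^ sOf u' * tOf u < 2 * (2 ^ sOf v' * tOf v) := by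
      rw [h1, htv, hdu', hdv']; omega
    have hB2 : 2 ^ sOf v' * tOf v < 2 * (2 ^ sOf u' * tOf u) := by
      rw [h1, htv, hdu', hdv']; omega
    have K1 : 2 ^ (sOf u' + sOf v) * (tOf u * tOf v) <
        2 ^ (sOf u + sOf v' + 2) * (tOf u * tOf v) := by
      calc 2 ^ (sOf u' + sOf v) * (tOf u * tOf v)
          = (2 ^ sOf u' * tOf u) * (2 ^ sOf v * tOf v) := by ring
        _ < (2 * (2 ^ sOf v' * tOf v)) * (2 * (2 ^ sOf u * tOf u)) :=
            Nat.mul_lt_mul'' hB1 hA2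
        _ = 2 ^ (sOf u + sOf v' + 2) * (tOf u * tOf v) := by ring
    have K2 : 2 ^ (sOf u + sOf v') * (tOf u * tOf v) <
        2 ^ (sOf u' + sOf v + 2) * (tOf u * tOf v) := by
      calc 2 ^ (sOf u + sOf v') * (tOf u * tOf v)
          = (2 ^ sOf u * tOf u) * (2 ^ sOf v' * tOf v) := by ring
        _ < (2 * (2 ^ sOf v * tOf v)) * (2 * (2 ^ sOf u' * tOf u)) :=
            Nat.mul_lt_mul'' hA1 hB2
        _ = 2 ^ (sOf u' + sOf v + 2) * (tOf u * tOf v) := by ring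
    have K1' : sOf u' + sOf v < sOf u + sOf v' + 2 :=
      (Nat.pow_lt_pow_iff_right (by norm_num)).1
        (lt_of_mul_lt_mul_right K1 (Nat.zero_le _))
    have K2' : sOf u + sOf v' < sOf u' + sOf v + 2 :=
      (Nat.pow_lt_pow_iff_right (by norm_num)).1
        (lt_of_mul_lt_mul_right K2 (Nat.zero_le _))
    have hab : sOf u = sOf u' ∧ sOf v = sOf v' := by omega
    have hu : u = u' := by rw [← hdu, ← hdu', hab.1, h1]
    have hv : v = v' := by rw [← hdv, ← hdv', hab.2, htv]
    exact Subtype.ext (Prod.ext hu hv)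
  · -- support mono CY1 ⊆ range
    rintro ⟨d, e⟩ hsupp
    obtain ⟨⟨hd, hde, hy3⟩, hnd⟩ := mono_cond hsupp
    have hq0 : q ≠ 0 := mono_q_ne goodCY1 hsupp
    have hd0 : 0 < d := by obtain ⟨m, hm⟩ := hd; omega
    have he0 : e ≠ 0 := by omega
    have ht := tOf_odd he0
    have ht0 : 0 < tOf e := by obtain ⟨m, hm⟩ := ht; omega
    have hdec : 2 ^ sOf e * tOf e = e := pow2_decomp e
    have hPs : 2 ^ sOf e * tOf e < 2 ^ (2 * sOf e + 1) * d := by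
      calc 2 ^ sOf e * tOf e < 2 ^ sOf e * (2 ^ (sOf e + 1) * d) :=
            mul_lt_mul_of_pos_left hy3 (Nat.pow_pos (by norm_num))
        _ = 2 ^ (2 * sOf e + 1) * d := by ring
    have hP : ∃ α, 2 ^ sOf e * tOf e < 2 ^ (2 * α + 1) * d := ⟨sOf e, hPs⟩
    have hPα := Nat.find_spec hP
    have hαs : Nat.find hP ≤ sOf e := Nat.find_min' hP hPs
    have hab : Nat.find hP + (sOf e - Nat.find hP) = sOf e := by omega
    have hC2 : 2 ^ (sOf e - Nat.find hP) * tOf e < 2 * (2 ^ Nat.find hP * d) := by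
      have h1 : 2 ^ Nat.find hP * (2 ^ (sOf e - Nat.find hP) * tOf e) <
          2 ^ Nat.find hP * (2 * (2 ^ Nat.find hP * d)) := by
        calc 2 ^ Nat.find hP * (2 ^ (sOf e - Nat.find hP) * tOf e)
            = 2 ^ (Nat.find hP + (sOf e - Nat.find hP)) * tOf e := by ring
          _ = 2 ^ sOf e * tOf e := by rw [hab]
          _ < 2 ^ (2 * Nat.find hP + 1) * d := hPα
          _ = 2 ^ Nat.find hP * (2 * (2 ^ Nat.find hP * d)) := by ring
      exact lt_of_mul_lt_mul_left h1 (Nat.zero_le _)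
    have hC1 : 2 ^ Nat.find hP * d < 2 * (2 ^ (sOf e - Nat.find hP) * tOf e) := by
      rcases Nat.eq_zero_or_pos (Nat.find hP) with h0 | hpos
      · rw [h0]
        simp only [pow_zero, one_mul, Nat.sub_zero]
        calc d < 2 * e := hde
          _ = 2 * (2 ^ sOf e * tOf e) := by rw [hdec]
      · obtain ⟨γ, hγ⟩ : ∃ γ, Nat.find hP = γ + 1 := ⟨Nat.find hP - 1, by omega⟩
        have hnP : ¬ 2 ^ sOf e * tOf e < 2 ^ (2 * γ + 1) * d :=
          Nat.find_min hP (by omega)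
        have hne : 2 ^ (2 * γ + 1) * d ≠ 2 ^ sOf e * tOf e := by
          intro heq
          obtain ⟨hs', htd⟩ := pow2_unique hd ht heq
          exact hnd ⟨htd.symm, by rw [← hs']; exact ⟨γ, by omega⟩⟩
        have hlt : 2 ^ (2 * γ + 1) * d < 2 ^ sOf e * tOf e :=
          lt_of_le_of_ne (Nat.not_lt.mp hnP) hne
        have h1 : 2 ^ Nat.find hP * (2 ^ Nat.find hP * d) <
            2 ^ Nat.find hP * (2 * (2 ^ (sOf e - Nat.find hP) * tOf e)) := by
          calc 2 ^ Nat.find hP * (2 ^ Nat.find hP * d)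
              = 2 * (2 ^ (2 * γ + 1) * d) := by rw [hγ]; ring
            _ < 2 * (2 ^ sOf e * tOf e) := by omega
            _ = 2 ^ Nat.find hP * (2 * (2 ^ (sOf e - Nat.find hP) * tOf e)) := by
                conv_lhs => rw [← hab]
                ring
        exact lt_of_mul_lt_mul_left h1 (Nat.zero_le _)
    have hCX : CX (2 ^ Nat.find hP * d, 2 ^ (sOf e - Nat.find hP) * tOf e) :=
      ⟨Nat.mul_pos (Nat.pow_pos (by norm_num)) hd0,
       Nat.mul_pos (Nat.pow_pos (by norm_num)) ht0, hC1, hC2⟩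
    refine ⟨⟨(2 ^ Nat.find hP * d, 2 ^ (sOf e - Nat.find hP) * tOf e),
      mono_ne_zero hq0 hCX⟩, ?_⟩
    have hstu : sOf (2 ^ Nat.find hP * d) = Nat.find hP ∧
        tOf (2 ^ Nat.find hP * d) = d := sOf_tOf_eq hd
    have hstv : sOf (2 ^ (sOf e - Nat.find hP) * tOf e) = sOf e - Nat.find hP ∧
        tOf (2 ^ (sOf e - Nat.find hP) * tOf e) = tOf e := sOf_tOf_eq ht
    simp only [hstu.1, hstu.2, hstv.1, hstv.2]
    refine Prod.ext rfl ?_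
    dsimp only
    rw [hab, hdec]
  · -- values agree
    rintro ⟨⟨u, v⟩, hx⟩
    obtain ⟨hu0, hv0, huv, hvu⟩ := mono_cond hx
    have hdu : 2 ^ sOf u * tOf u = u := pow2_decomp u
    have hdv : 2 ^ sOf v * tOf v = v := pow2_decomp v
    have hd := tOf_odd (by omega : u ≠ 0)
    have ht := tOf_odd (by omega : v ≠ 0)
    have hd0 : 0 < tOf u := by obtain ⟨m, hm⟩ := hd; omega
    have ht0 : 0 < tOf v := by obtain ⟨m, hm⟩ := ht; omega
    have hst : sOf (2 ^ (sOf u + sOf v) * tOf v) = sOf u + sOf v ∧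
        tOf (2 ^ (sOf u + sOf v) * tOf v) = tOf v := sOf_tOf_eq ht
    have hble : (2 ^ sOf v : ℕ) ≤ 2 ^ (sOf u + sOf v) :=
      Nat.pow_le_pow_right (by norm_num) (by omega)
    have hale : (2 ^ (sOf u + 1) : ℕ) ≤ 2 ^ (sOf u + sOf v + 1) :=
      Nat.pow_le_pow_right (by norm_num) (by omega)
    have hCY1 : CY1 (tOf u, 2 ^ (sOf u + sOf v) * tOf v) := by
      refine ⟨⟨hd, ?_, ?_⟩, ?_⟩
      · -- tOf u < 2 * (2^(a+b) * tOf v)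
        dsimp only
        calc tOf u ≤ 2 ^ sOf u * tOf u := Nat.le_mul_of_pos_left _ (Nat.pow_pos (by norm_num))
          _ = u := hdu
          _ < 2 * v := huv
          _ = 2 * (2 ^ sOf v * tOf v) := by rw [hdv]
          _ ≤ 2 * (2 ^ (sOf u + sOf v) * tOf v) := by
              have := Nat.mul_le_mul_right (tOf v) hble
              omega
      · -- tOf (e') < 2^(sOf e' + 1) * tOf u
        dsimp only
        rw [hst.1, hst.2]
        calc tOf v ≤ 2 ^ sOf v * tOf v := Nat.le_mul_of_pos_left _ (Nat.pow_pos (by norm_num))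
          _ = v := hdv
          _ < 2 * u := hvu
          _ = 2 * (2 ^ sOf u * tOf u) := by rw [hdu]
          _ = 2 ^ (sOf u + 1) * tOf u := by ring
          _ ≤ 2 ^ (sOf u + sOf v + 1) * tOf u := Nat.mul_le_mul_right _ hale
      · -- not diagonal
        rintro ⟨hteq, hodd⟩
        dsimp only at hteq hodd
        rw [hst.2] at hteq
        rw [hst.1] at hodd
        -- hteq : tOf v = tOf u
        have e1 : 2 ^ sOf u * tOf u < 2 ^ (sOf v + 1) * tOf u := by
          calc 2 ^ sOf u * tOf u = u := hdu
            _ < 2 * v := huv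
            _ = 2 * (2 ^ sOf v * tOf v) := by rw [hdv]
            _ = 2 ^ (sOf v + 1) * tOf u := by rw [hteq]; ring
        have e2 : 2 ^ sOf v * tOf u < 2 ^ (sOf u + 1) * tOf u := by
          calc 2 ^ sOf v * tOf u = 2 ^ sOf v * tOf v := by rw [hteq]
            _ = v := hdv
            _ < 2 * u := hvu
            _ = 2 * (2 ^ sOf u * tOf u) := by rw [hdu]
            _ = 2 ^ (sOf u + 1) * tOf u := by ring
        have e1' : sOf u < sOf v + 1 :=
          (Nat.pow_lt_pow_iff_right (by norm_num)).1
            (lt_of_mul_lt_mul_right e1 (Nat.zero_le _))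
        have e2' : sOf v < sOf u + 1 :=
          (Nat.pow_lt_pow_iff_right (by norm_num)).1
            (lt_of_mul_lt_mul_right e2 (Nat.zero_le _))
        rw [Nat.odd_iff] at hodd
        omega
    rw [mono_pos hCY1, mono_pos (show CX (u, v) from ⟨hu0, hv0, huv, hvu⟩)]
    congr 1
    dsimp only
    calc tOf u * (2 ^ (sOf u + sOf v) * tOf v)
        = (2 ^ sOf u * tOf u) * (2 ^ sOf v * tOf v) := by ring
      _ = u * v := by rw [hdu, hdv]

end Bij


section LHS

variable {q : ℂ}

noncomputable def F (q : ℂ) : ℕ × ℕ → ℂ :=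
  fun p => (-1) ^ p.1 * q ^ ((p.1 + 1) * (p.1 + 2) / 2 + (p.1 + 1) * p.2)

open scoped Classical in
noncomputable def Fe (q : ℂ) : ℕ × ℕ → ℂ := fun p => if Even p.1 then F q p else 0

open scoped Classical in
noncomputable def Fo (q : ℂ) : ℕ × ℕ → ℂ := fun p => if Even p.1 then 0 else F q p

lemma F_norm (q : ℂ) (p : ℕ × ℕ) :
    ‖F q p‖ = ‖q‖ ^ ((p.1 + 1) * (p.1 + 2) / 2 + (p.1 + 1) * p.2) := by
  simp [F, norm_mul, norm_pow]

lemma F_norm_summable (hq : ‖q‖ < 1) : Summable (fun p => ‖F q p‖) := by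
  have h0 : (0:ℝ) ≤ ‖q‖ := norm_nonneg q
  have hgeo : Summable (fun n : ℕ => ‖q‖ ^ n) := summable_geometric_of_lt_one h0 hq
  have hG := Summable.mul_of_nonneg (f := fun n : ℕ => ‖q‖ ^ n) (g := fun n : ℕ => ‖q‖ ^ n)
    hgeo hgeo (fun n => pow_nonneg h0 _) (fun n => pow_nonneg h0 _)
  refine Summable.of_nonneg_of_le (fun p => norm_nonneg _) (fun p => ?_) hG
  rw [F_norm, ← pow_add]
  apply pow_le_pow_of_le_one h0 hq.le
  have h1 : p.1 + 1 ≤ (p.1 + 1) * (p.1 + 2) / 2 := by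
    rw [Nat.le_div_iff_mul_le (by norm_num)]
    exact Nat.mul_le_mul_left _ (by omega)
  have h2 : p.2 ≤ (p.1 + 1) * p.2 := Nat.le_mul_of_pos_left _ (by omega)
  omega

lemma F_summable (hq : ‖q‖ < 1) : Summable (F q) := (F_norm_summable hq).of_norm

lemma Fe_summable (hq : ‖q‖ < 1) : Summable (Fe q) := by
  refine Summable.of_norm (Summable.of_nonneg_of_le (fun p => norm_nonneg _)
    (fun p => ?_) (F_norm_summable hq))
  rw [Fe]
  split
  · exact le_refl _
  · simp

lemma Fo_summable (hq : ‖q‖ < 1) : Summable (Fo q) := by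
  refine Summable.of_norm (Summable.of_nonneg_of_le (fun p => norm_nonneg _)
    (fun p => ?_) (F_norm_summable hq))
  rw [Fo]
  split
  · simp
  · exact le_refl _

lemma lhs_eq_tsum_F (hq : ‖q‖ < 1) :
    ∑' n : ℕ, (-1 : ℂ) ^ n * q ^ ((n + 1) * (n + 2) / 2) / (1 - q ^ (n + 1)) =
      ∑' p : ℕ × ℕ, F q p := by
  rw [Summable.tsum_prod' (F_summable hq) (fun n => (F_summable hq).prod_factor n)]
  refine tsum_congr fun n => ?_
  have hxnorm : ‖q ^ (n + 1)‖ < 1 := by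
    rw [norm_pow]
    calc ‖q‖ ^ (n + 1) ≤ ‖q‖ ^ 1 := pow_le_pow_of_le_one (norm_nonneg q) hq.le (by omega)
      _ = ‖q‖ := pow_one _
      _ < 1 := hq
  rw [div_eq_mul_inv, ← tsum_geometric_of_norm_lt_one hxnorm, ← tsum_mul_left]
  refine tsum_congr fun m => ?_
  rw [F]
  dsimp only
  rw [mul_assoc, ← pow_mul, ← pow_add]

lemma Fe_eq (q : ℂ) (x : ℕ × ℕ) :
    Fe q (2 * x.1, x.2) = mono q CA (2 * x.1 + 1, x.1 + 1 + x.2) := by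
  obtain ⟨k, m⟩ := x
  have heven : Even (2 * k) := ⟨k, by ring⟩
  rw [Fe, if_pos heven, F, mono_pos (show CA (2 * k + 1, k + 1 + m) from
    ⟨⟨k, by ring⟩, by omega⟩)]
  dsimp only
  have hneg : ((-1 : ℂ)) ^ (2 * k) = 1 := by
    rw [pow_mul]; norm_num
  rw [hneg, one_mul]
  have hdiv : (2 * k + 1) * (2 * k + 2) / 2 = (2 * k + 1) * (k + 1) := by
    rw [show (2 * k + 1) * (2 * k + 2) = ((2 * k + 1) * (k + 1)) * 2 by ring]
    exact Nat.mul_div_cancel _ (by norm_num)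
  rw [hdiv]
  congr 1
  ring

lemma Fo_eq (q : ℂ) (x : ℕ × ℕ) :
    Fo q (2 * x.1 + 1, x.2) = -(mono q CB (2 * (x.1 + x.2) + 3, x.1 + 1)) := by
  obtain ⟨k, m⟩ := x
  have hodd : ¬ Even (2 * k + 1) := by
    rintro ⟨c, hc⟩; omega
  rw [Fo, if_neg hodd, F, mono_pos (show CB (2 * (k + m) + 3, k + 1) from
    ⟨⟨k + m + 1, by ring⟩, by omega, by omega⟩)]
  dsimp only
  have hneg : ((-1 : ℂ)) ^ (2 * k + 1) = -1 := by
    rw [pow_succ, pow_mul]; norm_num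
  rw [hneg, neg_mul, one_mul, neg_inj]
  have hdiv : (2 * k + 1 + 1) * (2 * k + 1 + 2) / 2 = (k + 1) * (2 * k + 3) := by
    rw [show (2 * k + 1 + 1) * (2 * k + 1 + 2) = ((k + 1) * (2 * k + 3)) * 2 by ring]
    exact Nat.mul_div_cancel _ (by norm_num)
  rw [hdiv]
  congr 1
  ring

lemma tsum_F_split (hq : ‖q‖ < 1) :
    ∑' p : ℕ × ℕ, F q p = ∑' p, mono q CA p - ∑' p, mono q CB p := by
  have hsplit : ∀ p, F q p = Fe q p + Fo q p := by
    intro p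
    rw [Fe, Fo]
    split <;> simp
  rw [tsum_congr hsplit, Summable.tsum_add (Fe_summable hq) (Fo_summable hq)]
  have he1 : ∑' x : ℕ × ℕ, Fe q (2 * x.1, x.2) = ∑' p, Fe q p := by
    apply Function.Injective.tsum_eq
    · rintro ⟨a1, a2⟩ ⟨b1, b2⟩ hab
      simp only [Prod.mk.injEq] at hab
      exact Prod.ext (by omega) hab.2
    · rintro ⟨n, m⟩ hnm
      rw [mem_support, Fe] at hnm
      by_cases h : Even n
      · obtain ⟨c, hc⟩ := h
        exact ⟨(c, m), Prod.ext (by dsimp only; omega) rfl⟩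
      · rw [if_neg h] at hnm
        exact absurd rfl hnm
  have he3 : ∑' x : ℕ × ℕ, Fo q (2 * x.1 + 1, x.2) = ∑' p, Fo q p := by
    apply Function.Injective.tsum_eq
    · rintro ⟨a1, a2⟩ ⟨b1, b2⟩ hab
      simp only [Prod.mk.injEq] at hab
      exact Prod.ext (by omega) hab.2
    · rintro ⟨n, m⟩ hnm
      rw [mem_support, Fo] at hnm
      by_cases h : Even n
      · rw [if_pos h] at hnm
        exact absurd rfl hnm
      · have hodd : Odd n := Nat.odd_iff.mpr (by
          rw [Nat.even_iff] at h; omega)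
        obtain ⟨c, hc⟩ := hodd
        exact ⟨(c, m), Prod.ext (by dsimp only; omega) rfl⟩
  have he5 : ∑' x : ℕ × ℕ, mono q CA (2 * x.1 + 1, x.1 + 1 + x.2) = ∑' p, mono q CA p := by
    apply Function.Injective.tsum_eq
    · rintro ⟨a1, a2⟩ ⟨b1, b2⟩ hab
      simp only [Prod.mk.injEq] at hab
      have h1 : a1 = b1 := by omega
      exact Prod.ext h1 (by omega)
    · rintro ⟨n, m⟩ hnm
      have hc := mono_cond hnm
      obtain ⟨⟨c, hcc⟩, h2⟩ := hc
      refine ⟨(c, m - c - 1), Prod.ext (by dsimp only; omega) (by dsimp only; omega)⟩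
  have he6 : ∑' x : ℕ × ℕ, mono q CB (2 * (x.1 + x.2) + 3, x.1 + 1) = ∑' p, mono q CB p := by
    apply Function.Injective.tsum_eq
    · rintro ⟨a1, a2⟩ ⟨b1, b2⟩ hab
      simp only [Prod.mk.injEq] at hab
      have h1 : a1 = b1 := by omega
      exact Prod.ext h1 (by omega)
    · rintro ⟨n, m⟩ hnm
      have hc := mono_cond hnm
      obtain ⟨⟨c, hcc⟩, h2, h3⟩ := hc
      refine ⟨(m - 1, c - m), Prod.ext (by dsimp only; omega) (by dsimp only; omega)⟩
  have hFe : ∑' p, Fe q p = ∑' p, mono q CA p := by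
    rw [← he1, ← he5]
    exact tsum_congr fun x => Fe_eq q x
  have hFo : ∑' p, Fo q p = -∑' p, mono q CB p := by
    rw [← he3, ← he6]
    rw [tsum_congr fun x => Fo_eq q x]
    exact tsum_neg
  rw [hFe, hFo]
  ring

end LHS


section RHS

variable {q : ℂ}

noncomputable def SL (q : ℂ) (u : ℕ) : ℂ :=
  ∑ v ∈ Finset.Icc u (2 * u - 1), mono q CXle (u, v)

noncomputable def SLt (q : ℂ) (u : ℕ) : ℂ :=
  ∑ v ∈ Finset.Icc (u + 1) (2 * u - 1), mono q CXlt (u, v)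

lemma hasSum_SL (hq : ‖q‖ < 1) : HasSum (SL q) (∑' p, mono q CXle p) := by
  refine HasSum.prod_fiberwise (mono_summable hq goodCXle).hasSum (fun u => ?_)
  refine hasSum_sum_of_ne_finset_zero (fun v hv => ?_)
  rw [Finset.mem_Icc] at hv
  rw [mono, if_neg]
  rintro ⟨h1, h2, h3⟩
  dsimp only at h1 h2 h3
  omega

lemma hasSum_SLt (hq : ‖q‖ < 1) : HasSum (SLt q) (∑' p, mono q CXlt p) := by
  refine HasSum.prod_fiberwise (mono_summable hq goodCXlt).hasSum (fun u => ?_)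
  refine hasSum_sum_of_ne_finset_zero (fun v hv => ?_)
  rw [Finset.mem_Icc] at hv
  rw [mono, if_neg]
  rintro ⟨h1, h2, h3⟩
  dsimp only at h1 h2 h3
  omega

lemma tsum_CXle_eq (hq : ‖q‖ < 1) :
    ∑' p, mono q CXle p = ∑' j : ℕ, SL q (j + 1) := by
  rw [← (hasSum_SL hq).tsum_eq, Summable.tsum_eq_zero_add (hasSum_SL hq).summable]
  have h0 : SL q 0 = 0 := by
    rw [SL]
    refine Finset.sum_eq_zero fun v hv => ?_
    rw [mono, if_neg]
    rintro ⟨h1, _, _⟩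
    dsimp only at h1
    omega
  rw [h0, zero_add]

lemma tsum_CXlt_eq (hq : ‖q‖ < 1) :
    ∑' p, mono q CXlt p = ∑' j : ℕ, SLt q (j + 1) := by
  rw [← (hasSum_SLt hq).tsum_eq, Summable.tsum_eq_zero_add (hasSum_SLt hq).summable]
  have h0 : SLt q 0 = 0 := by
    rw [SLt]
    refine Finset.sum_eq_zero fun v hv => ?_
    rw [mono, if_neg]
    rintro ⟨h1, _, _⟩
    dsimp only at h1
    omega
  rw [h0, zero_add]

lemma SL_succ (q : ℂ) (j : ℕ) :
    SL q (j + 1) = ∑ v ∈ Finset.Icc (j + 1) (2 * j + 1), q ^ ((j + 1) * v) := by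
  rw [SL]
  have hbound : 2 * (j + 1) - 1 = 2 * j + 1 := by omega
  rw [hbound]
  refine Finset.sum_congr rfl fun v hv => ?_
  rw [Finset.mem_Icc] at hv
  exact mono_pos ⟨by omega, by omega, by omega⟩

lemma SLt_succ (q : ℂ) (j : ℕ) :
    SLt q (j + 1) = ∑ v ∈ Finset.Icc (j + 2) (2 * j + 1), q ^ ((j + 1) * v) := by
  rw [SLt]
  have hbound : 2 * (j + 1) - 1 = 2 * j + 1 := by omega
  rw [hbound]
  refine Finset.sum_congr rfl fun v hv => ?_
  rw [Finset.mem_Icc] at hv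
  exact mono_pos ⟨by omega, by omega, by omega⟩

lemma tsum_CXlt_eq_CXgt : ∑' p, mono q CXlt p = ∑' p, mono q CXgt p := by
  rw [← (Equiv.prodComm ℕ ℕ).tsum_eq (mono q CXgt)]
  exact tsum_congr fun x => (swap_eq q x).symm

lemma summable_B (hq : ‖q‖ < 1) : Summable (fun j : ℕ => q ^ (2 * (j + 1) ^ 2)) := by
  refine Summable.of_norm (Summable.of_nonneg_of_le (fun j => norm_nonneg _) (fun j => ?_)
    (summable_geometric_of_lt_one (norm_nonneg q) hq))
  rw [norm_pow]
  apply pow_le_pow_of_le_one (norm_nonneg q) hq.le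
  have h2 : (j + 1) ^ 2 = (j + 1) * (j + 1) := pow_two _
  have h1 : j + 1 ≤ (j + 1) * (j + 1) := Nat.le_mul_of_pos_left _ (by omega)
  omega

lemma term_eq (q : ℂ) (j : ℕ) :
    q ^ ((j + 1) ^ 2) * (1 + q ^ ((j + 1) ^ 2) + 2 * ∑ i ∈ Finset.Icc 1 j, q ^ (i * (j + 1)))
      = SL q (j + 1) + SLt q (j + 1) + q ^ (2 * (j + 1) ^ 2) := by
  have hinsert : Finset.Icc (j + 1) (2 * j + 1) = insert (j + 1) (Finset.Icc (j + 2) (2 * j + 1)) := by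
    ext x
    simp only [Finset.mem_Icc, Finset.mem_insert]
    omega
  have hnotmem : (j + 1) ∉ Finset.Icc (j + 2) (2 * j + 1) := by
    simp [Finset.mem_Icc]
  have hmap : (Finset.Icc 1 j).map (addRightEmbedding (j + 1)) = Finset.Icc (j + 2) (2 * j + 1) := by
    rw [Finset.map_add_right_Icc]
    congr 1 <;> omega
  have hrest : ∑ v ∈ Finset.Icc (j + 2) (2 * j + 1), q ^ ((j + 1) * v)
      = q ^ ((j + 1) ^ 2) * ∑ i ∈ Finset.Icc 1 j, q ^ (i * (j + 1)) := by
    rw [← hmap, Finset.sum_map, Finset.mul_sum]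
    refine Finset.sum_congr rfl fun i hi => ?_
    rw [← pow_add]
    congr 1
    have hemb : addRightEmbedding (j + 1) i = i + (j + 1) := rfl
    rw [hemb, pow_two]
    ring
  rw [SL_succ, SLt_succ, hinsert, Finset.sum_insert hnotmem, hrest]
  have hA : q ^ ((j + 1) * (j + 1)) = q ^ ((j + 1) ^ 2) := by
    congr 1
    rw [pow_two]
  have hB : q ^ (2 * (j + 1) ^ 2) = q ^ ((j + 1) ^ 2) * q ^ ((j + 1) ^ 2) := by
    rw [← pow_add]
    congr 1
    ring
  rw [hA, hB]
  ring

lemma rhs_eq (hq : ‖q‖ < 1) :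
    ∑' j : ℕ, q ^ ((j + 1) ^ 2) *
        (1 + q ^ ((j + 1) ^ 2) + 2 * ∑ i ∈ Finset.Icc 1 j, q ^ (i * (j + 1)))
      = ∑' p, mono q CXle p + ∑' p, mono q CXlt p + ∑' j : ℕ, q ^ (2 * (j + 1) ^ 2) := by
  have hS1 : Summable (fun j => SL q (j + 1)) :=
    (summable_nat_add_iff 1).2 (hasSum_SL hq).summable
  have hS2 : Summable (fun j => SLt q (j + 1)) :=
    (summable_nat_add_iff 1).2 (hasSum_SLt hq).summable
  rw [tsum_congr (term_eq q), Summable.tsum_add (hS1.add hS2) (summable_B hq), Summable.tsum_add hS1 hS2,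
    ← tsum_CXle_eq hq, ← tsum_CXlt_eq hq]

end RHS

end Stmt0Aux

open Stmt0Aux in
/-- For `‖q‖ < 1`,
`h(q) = ∑_{n≥1} (-1)^{n+1} q^{n(n+1)/2}/(1-q^n)`
equals `∑_{j≥1} q^{j^2} (1 + 2q^j + 2q^{2j} + ⋯ + 2q^{j^2-j} + q^{j^2})`.
(Indices shifted: `n = n+1`, `j = j+1`.) -/
theorem stmt0 (q : ℂ) (hq : ‖q‖ < 1) :
    ∑' n : ℕ, (-1 : ℂ) ^ n * q ^ ((n + 1) * (n + 2) / 2) / (1 - q ^ (n + 1)) =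
      ∑' j : ℕ, q ^ ((j + 1) ^ 2) *
        (1 + q ^ ((j + 1) ^ 2) + 2 * ∑ i ∈ Finset.Icc 1 j, q ^ (i * (j + 1))) := by
  rw [lhs_eq_tsum_F hq, tsum_F_split hq]
  rw [tsum_congr (split_A q), Summable.tsum_add (mono_summable hq goodCY) (mono_summable hq goodCC)]
  rw [tsum_CC_eq_CB]
  rw [tsum_congr (split_Y q), Summable.tsum_add (mono_summable hq goodCY1) (mono_summable hq goodCY2)]
  rw [tsum_CY1_eq_CX, tsum_CY2_eq]
  rw [tsum_congr (split_X q), Summable.tsum_add (mono_summable hq goodCXle) (mono_summable hq goodCXgt)]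
  rw [← tsum_CXlt_eq_CXgt]
  rw [rhs_eq hq]
  ring
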